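/- Fix α > 0, κ ≥ 0 and an index j ≥ 1. Let (X_i)_{i≥1} be independent random variables such that X_i has the Beta(1, α + κ·δ(i = j)) law (density x ↦ β_i(1−x)^{β_i−1} on [0,1] with β_j = α + κ and β_i = α for i ≠ j), and let a_j = X_j ∏_{n=1}^{j−1} (1 − X_n) be the j-th agile stick-breaking weight (the self-transition probability of state j under the agile prior). Then E[a_j] = (1/(1 + α + κ)) · (α/(1 + α))^{j−1}. In particular E[a_j] is strictly decreasing in κ, so a larger agile hyper-parameter κ yields a strictly smaller expected self-transition probability. -/

import Mathlib

open MeasureTheory ProbabilityTheory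

/-- For `b > 0`, the measure `Beta(1, b)` on `ℝ`, with density `x ↦ b (1−x)^(b−1)` on
`[0,1]` (and `0` elsewhere) with respect to Lebesgue measure. -/
noncomputable def betaOne (b : ℝ) : Measure ℝ :=
  volume.withDensity fun x =>
    ENNReal.ofReal (if x ∈ Set.Icc (0 : ℝ) 1 then b * (1 - x) ^ (b - 1) else 0)

lemma J_eq (c : ℝ) (hc : -1 < c) : ∫ x in (0:ℝ)..1, (1 - x) ^ c = 1 / (c + 1) := by
  have h := intervalIntegral.integral_comp_sub_left (a := (0:ℝ)) (b := 1) (fun x => x ^ c) 1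
  simp only [sub_zero, sub_self] at h
  rw [h, integral_rpow (Or.inl hc), Real.one_rpow, Real.zero_rpow (by linarith)]
  ring

lemma J_int (c : ℝ) (hc : -1 < c) :
    IntervalIntegrable (fun x => (1 - x) ^ c) volume (0:ℝ) 1 := by
  have h := (intervalIntegral.intervalIntegrable_rpow' (a := (0:ℝ)) (b := 1) hc).comp_sub_left 1
  simpa using h.symm

lemma betaOne_integral (b : ℝ) (hb : 0 < b) (g : ℝ → ℝ) :
    ∫ x, g x ∂betaOne b = ∫ x in (0:ℝ)..1, b * (1 - x) ^ (b - 1) * g x := by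
  have hd : Measurable fun x : ℝ =>
      Real.toNNReal (if x ∈ Set.Icc (0:ℝ) 1 then b * (1 - x) ^ (b - 1) else 0) := by
    apply Measurable.real_toNNReal
    exact Measurable.ite measurableSet_Icc
      (measurable_const.mul ((measurable_const.sub measurable_id).pow measurable_const))
      measurable_const
  have h1 : betaOne b = volume.withDensity fun x =>
      (((if x ∈ Set.Icc (0:ℝ) 1 then b * (1 - x) ^ (b - 1) else 0).toNNReal : NNReal) : ENNReal) := rfl
  rw [h1, integral_withDensity_eq_integral_smul hd]
  have h2 : ∀ x : ℝ,
      (Real.toNNReal (if x ∈ Set.Icc (0:ℝ) 1 then b * (1 - x) ^ (b - 1) else 0)) • g x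
        = Set.indicator (Set.Icc (0:ℝ) 1) (fun x => b * (1 - x) ^ (b - 1) * g x) x := by
    intro x
    rw [NNReal.smul_def, smul_eq_mul, Real.coe_toNNReal']
    by_cases hx : x ∈ Set.Icc (0:ℝ) 1
    · rw [if_pos hx, Set.indicator_of_mem hx,
        max_eq_left (mul_nonneg hb.le (Real.rpow_nonneg (by linarith [hx.2]) _))]
    · rw [if_neg hx, Set.indicator_of_notMem hx]; simp
  simp only [h2]
  rw [integral_indicator measurableSet_Icc, integral_Icc_eq_integral_Ioc,
    ← intervalIntegral.integral_of_le (by norm_num : (0:ℝ) ≤ 1)]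

lemma betaOne_exp_x (b : ℝ) (hb : 0 < b) : ∫ x, x ∂betaOne b = 1 / (1 + b) := by
  rw [betaOne_integral b hb _]
  have hcongr : Set.EqOn (fun x => b * (1 - x) ^ (b - 1) * x)
      (fun x => b * ((1 - x) ^ (b - 1) - (1 - x) ^ b)) (Set.uIcc (0:ℝ) 1) := by
    intro x hx
    rw [Set.uIcc_of_le (by norm_num : (0:ℝ) ≤ 1)] at hx
    rcases eq_or_lt_of_le hx.2 with h1 | h1
    · subst h1
      by_cases hb1 : b = 1
      · subst hb1; norm_num
      · simp [Real.zero_rpow (by intro h; apply hb1; linarith : b - 1 ≠ 0),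
          Real.zero_rpow (ne_of_gt hb)]
    · have hpos : (0:ℝ) < 1 - x := by linarith
      have : (1 - x) ^ b = (1 - x) ^ (b - 1) * (1 - x) := by
        rw [← Real.rpow_add_one (ne_of_gt hpos)]; ring_nf
      simp only [this]; ring
  rw [intervalIntegral.integral_congr hcongr,
    intervalIntegral.integral_const_mul,
    intervalIntegral.integral_sub (J_int _ (by linarith)) (J_int _ (by linarith)),
    J_eq _ (by linarith), J_eq _ (by linarith)]
  have h1 : b - 1 + 1 = b := by ring
  have hb0 : b ≠ 0 := ne_of_gt hb
  have hb1 : b + 1 ≠ 0 := by linarith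
  have hb2 : (1:ℝ) + b ≠ 0 := by linarith
  rw [h1]
  field_simp
  ring

lemma betaOne_exp_one_sub (b : ℝ) (hb : 0 < b) : ∫ x, (1 - x) ∂betaOne b = b / (1 + b) := by
  rw [betaOne_integral b hb _]
  have hcongr : Set.EqOn (fun x => b * (1 - x) ^ (b - 1) * (1 - x))
      (fun x => b * (1 - x) ^ b) (Set.uIcc (0:ℝ) 1) := by
    intro x hx
    rw [Set.uIcc_of_le (by norm_num : (0:ℝ) ≤ 1)] at hx
    rcases eq_or_lt_of_le hx.2 with h1 | h1
    · subst h1; simp [Real.zero_rpow (ne_of_gt hb)]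
    · have hpos : (0:ℝ) < 1 - x := by linarith
      have : (1 - x) ^ b = (1 - x) ^ (b - 1) * (1 - x) := by
        rw [← Real.rpow_add_one (ne_of_gt hpos)]; ring_nf
      simp only [this]; ring
  rw [intervalIntegral.integral_congr hcongr,
    intervalIntegral.integral_const_mul, J_eq _ (by linarith)]
  rw [mul_one_div, add_comm]

lemma integral_prod_range {Ω : Type*} [MeasurableSpace Ω] (μ : Measure Ω)
    [IsProbabilityMeasure μ] (Y : ℕ → Ω → ℝ) (hmeas : ∀ i, Measurable (Y i))
    (hind : iIndepFun Y μ) (m : ℕ) :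
    ∫ ω, ∏ n ∈ Finset.range m, Y n ω ∂μ = ∏ n ∈ Finset.range m, ∫ ω, Y n ω ∂μ := by
  induction m with
  | zero => simp
  | succ m ih =>
    simp only [Finset.prod_range_succ]
    have hprod : (fun ω => ∏ n ∈ Finset.range m, Y n ω) = ∏ n ∈ Finset.range m, Y n := by
      ext ω; exact (Finset.prod_apply ω _ Y).symm
    have hindp := hind.indepFun_prod_range_succ hmeas m
    have hfun : (∏ n ∈ Finset.range m, Y n) = fun a => ∏ n ∈ Finset.range m, Y n a :=
      funext fun a => Finset.prod_apply a _ Y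
    have hasm : AEStronglyMeasurable (∏ n ∈ Finset.range m, Y n) μ := by
      rw [hfun]
      exact (Finset.measurable_prod _ (fun i _ => hmeas i)).aestronglyMeasurable
    have := hindp.integral_mul_eq_mul_integral hasm ((hmeas m).aestronglyMeasurable)
    calc ∫ ω, (∏ n ∈ Finset.range m, Y n ω) * Y m ω ∂μ
        = ∫ ω, ((∏ n ∈ Finset.range m, Y n) * Y m) ω ∂μ := by
          congr 1; ext ω; simp [Finset.prod_apply]
      _ = (∫ ω, (∏ n ∈ Finset.range m, Y n) ω ∂μ) * ∫ ω, Y m ω ∂μ := this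
      _ = (∫ ω, ∏ n ∈ Finset.range m, Y n ω ∂μ) * ∫ ω, Y m ω ∂μ := by
          congr 1; apply integral_congr_ae; filter_upwards with ω; simp [Finset.prod_apply]
      _ = _ := by rw [ih]


/-- **Expected self-transition weight under the agile prior.**
Fix `α > 0`, `κ ≥ 0` and an index `j` (0-indexed version of `(X_i)_{i ≥ 1}` and `j ≥ 1`;
the exponent `j` below corresponds to `j − 1` in 1-indexed notation).  Let `(X_i)` be
independent with `X i ~ Beta(1, α + κ·δ(i = j))`, and let
`a j = X j * ∏_{n < j} (1 − X n)` be the `j`-th agile stick-breaking weight.  Then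
`E[a j] = (1/(1 + α + κ)) · (α/(1 + α))^j`, and this quantity is strictly decreasing in
the agile hyper-parameter `κ` (on `κ ≥ 0`), so a larger `κ` yields a strictly smaller
expected self-transition probability. -/
theorem agile_stick_breaking_expected_weight
    (α κ : ℝ) (hα : 0 < α) (hκ : 0 ≤ κ) (j : ℕ)
    {Ω : Type*} [MeasurableSpace Ω] (μ : Measure Ω) [IsProbabilityMeasure μ]
    (X : ℕ → Ω → ℝ) (hXmeas : ∀ i, Measurable (X i))
    (hindep : iIndepFun X μ)
    (hlaw : ∀ i, Measure.map (X i) μ = betaOne (if i = j then α + κ else α)) :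
    (∫ ω, X j ω * ∏ n ∈ Finset.range j, (1 - X n ω) ∂μ) =
      (1 / (1 + α + κ)) * (α / (1 + α)) ^ j ∧
    StrictAntiOn (fun k : ℝ => (1 / (1 + α + k)) * (α / (1 + α)) ^ j)
      (Set.Ici (0 : ℝ)) := by
  constructor
  · -- the expectation
    set Y : ℕ → Ω → ℝ := fun n ω => 1 - X n ω with hY
    have hYmeas : ∀ i, Measurable (Y i) := fun i => measurable_const.sub (hXmeas i)
    have hYind : iIndepFun Y μ :=
      hindep.comp (fun _ x => 1 - x) (fun _ => measurable_const.sub measurable_id)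
    -- independence of X j from the product
    have hgmeas : ∀ n : ℕ, Measurable (fun x : ℝ => if n = j then x else 1 - x) := by
      intro n
      by_cases h : n = j
      · simpa [h] using (show Measurable fun x : ℝ => x from measurable_id)
      · simpa [h] using (show Measurable fun x : ℝ => 1 - x from measurable_const.sub measurable_id)
    have hZind : iIndepFun
        (fun n => if n = j then X n else Y n) μ := by
      have h2 := hindep.comp (fun n x => if n = j then x else 1 - x) hgmeas
      convert h2 using 2 with n
      by_cases h : n = j
      · simp [h]; rfl
      · simp [h]; rfl
    have hprod_indep : IndepFun (∏ n ∈ Finset.range j, (fun n => if n = j then X n else Y n) n)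
        ((fun n => if n = j then X n else Y n) j) μ :=
      hZind.indepFun_finset_prod_of_notMem
        (fun n => by by_cases h : n = j <;> simp [h, hXmeas j, hYmeas n])
        (by simp : j ∉ Finset.range j)
    simp only [if_pos rfl] at hprod_indep
    have hprod_eq : (∏ n ∈ Finset.range j, (fun n => if n = j then X n else Y n) n)
        = ∏ n ∈ Finset.range j, Y n := by
      apply Finset.prod_congr rfl
      intro n hn
      have : n ≠ j := Nat.ne_of_lt (Finset.mem_range.mp hn)
      simp [this]
    rw [hprod_eq] at hprod_indep
    have key : ∫ ω, X j ω * ∏ n ∈ Finset.range j, (1 - X n ω) ∂μ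
        = (∫ ω, X j ω ∂μ) * ∫ ω, ∏ n ∈ Finset.range j, Y n ω ∂μ := by
      have hfun : (∏ n ∈ Finset.range j, Y n) = fun a => ∏ n ∈ Finset.range j, Y n a :=
        funext fun a => Finset.prod_apply a _ Y
      have hasm : AEStronglyMeasurable (∏ n ∈ Finset.range j, Y n) μ := by
        rw [hfun]
        exact (Finset.measurable_prod _ (fun i _ => hYmeas i)).aestronglyMeasurable
      have h1 := (hprod_indep.symm).integral_mul_eq_mul_integral (hXmeas j).aestronglyMeasurable hasm
      calc ∫ ω, X j ω * ∏ n ∈ Finset.range j, (1 - X n ω) ∂μ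
          = ∫ ω, (X j * ∏ n ∈ Finset.range j, Y n) ω ∂μ := by
            congr 1; ext ω; simp [Finset.prod_apply, hY]
        _ = (∫ ω, X j ω ∂μ) * ∫ ω, (∏ n ∈ Finset.range j, Y n) ω ∂μ := h1
        _ = _ := by
            congr 1; apply integral_congr_ae; filter_upwards with ω; simp [Finset.prod_apply]
    rw [key, integral_prod_range μ Y hYmeas hYind j]
    -- marginal expectations
    have hXj : ∫ ω, X j ω ∂μ = 1 / (1 + α + κ) := by
      have := integral_map (μ := μ) (φ := X j) (hXmeas j).aemeasurable
        (f := fun x : ℝ => x) aestronglyMeasurable_id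
      rw [hlaw j, if_pos rfl] at this
      rw [← this, betaOne_exp_x (α + κ) (by linarith)]
      ring_nf
    have hYn : ∀ n, n ≠ j → ∫ ω, Y n ω ∂μ = α / (1 + α) := by
      intro n hn
      have := integral_map (μ := μ) (φ := X n) (hXmeas n).aemeasurable
        (f := fun x : ℝ => 1 - x)
        ((measurable_const.sub measurable_id).aestronglyMeasurable)
      rw [hlaw n, if_neg hn] at this
      rw [hY]
      simp only
      rw [← this, betaOne_exp_one_sub α hα]
    rw [hXj]
    congr 1
    rw [Finset.prod_congr rfl (fun n hn => hYn n (Nat.ne_of_lt (Finset.mem_range.mp hn))),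
      Finset.prod_const, Finset.card_range]
  · -- strict antitonicity
    intro k1 hk1 k2 hk2 hlt
    simp only
    apply mul_lt_mul_of_pos_right
    · apply one_div_lt_one_div_of_lt
      · have : (0:ℝ) ≤ k1 := hk1; linarith
      · linarith
    · apply pow_pos
      apply div_pos hα (by linarith)
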